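/- Let S = ⟨a_1,…,a_n⟩ ⊆ ℤ^m ⊕ T be a reduced monoid and let B = {b_1,…,b_s} ⊆ S ∖ {0}. For each i choose a factorization β_i = (β_{i1},…,β_{in}) ∈ ℕ^n of b_i and set the monomial x^{β_i} = x_1^{β_{i1}} ⋯ x_n^{β_{in}} ∈ K[x_1,…,x_n]. If D is any monomial K-basis of the quotient K[x_1,…,x_n] / (I_S + ⟨x^{β_1},…, x^{β_s}⟩), then the map h : D → Ap_S(B) sending a monomial x^α to deg_S(x^α) = α_1 a_1 + ⋯ + α_n a_n is a bijection. -/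

import Mathlib

open MvPolynomial

/-- The `S`-degree of an exponent vector: `deg_S(x^lam) = lam_1 • a_1 + ⋯ + lam_n • a_n`. -/
def degS {n : ℕ} {G : Type*} [AddCommMonoid G] (a : Fin n → G) (lam : Fin n → ℕ) : G :=
  ∑ i, lam i • a i

/-- The lattice ideal of the monoid generated by `a`: the ideal generated by all binomials
`x^α - x^β` with `deg_S(x^α) = deg_S(x^β)`. -/
noncomputable def latticeIdeal (K : Type) [Field K] {n : ℕ} {G : Type*} [AddCommMonoid G]
    (a : Fin n → G) : Ideal (MvPolynomial (Fin n) K) :=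
  Ideal.span {f | ∃ α β : Fin n →₀ ℕ, degS a ⇑α = degS a ⇑β ∧
    f = monomial α (1 : K) - monomial β 1}

/-- The Apéry set of the monoid generated by `a` with respect to the family `b`. -/
def apery {n s : ℕ} {G : Type*} [AddCommGroup G] (a : Fin n → G) (b : Fin s → G) : Set G :=
  {x | x ∈ AddSubmonoid.closure (Set.range a) ∧
    ∀ i, x - b i ∉ AddSubmonoid.closure (Set.range a)}

section Aux

variable {n : ℕ} {G : Type*} [AddCommMonoid G] (a : Fin n → G)

theorem degS_add (α β : Fin n →₀ ℕ) : degS a ⇑(α + β) = degS a ⇑α + degS a ⇑β := by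
  simp [degS, add_smul, Finset.sum_add_distrib]

theorem degS_zero : degS a ⇑(0 : Fin n →₀ ℕ) = 0 := by simp [degS]

theorem degS_single (i : Fin n) : degS a ⇑(Finsupp.single i 1) = a i := by
  simp [degS, Finsupp.single_apply]

theorem degS_mem_closure (α : Fin n →₀ ℕ) :
    degS a ⇑α ∈ AddSubmonoid.closure (Set.range a) := by
  refine AddSubmonoid.sum_mem _ fun i _ => AddSubmonoid.nsmul_mem _ ?_ _
  exact AddSubmonoid.subset_closure ⟨i, rfl⟩

theorem exists_factorization {x : G} (hx : x ∈ AddSubmonoid.closure (Set.range a)) :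
    ∃ α : Fin n →₀ ℕ, degS a ⇑α = x := by
  induction hx using AddSubmonoid.closure_induction with
  | mem x hx => obtain ⟨i, rfl⟩ := hx; exact ⟨Finsupp.single i 1, degS_single a i⟩
  | zero => exact ⟨0, degS_zero a⟩
  | add x y _ _ hx hy =>
      obtain ⟨α, rfl⟩ := hx; obtain ⟨γ, rfl⟩ := hy
      exact ⟨α + γ, degS_add a α γ⟩

theorem phi_monomial (K : Type) [Field K] {S : Type*} [AddCommMonoid S] (aS : Fin n → S)
    (α : Fin n →₀ ℕ) (c : K) :
    MvPolynomial.aeval (fun i => AddMonoidAlgebra.single (aS i) (1:K)) (monomial α c)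
      = AddMonoidAlgebra.single (∑ i, α i • aS i) c := by
  rw [aeval_monomial]
  rw [Finsupp.prod_fintype _ _ (fun i => by simp [AddMonoidAlgebra.single_pow])]
  simp only [AddMonoidAlgebra.single_pow, one_pow]
  rw [AddMonoidAlgebra.prod_single, Finset.prod_const_one,
    AddMonoidAlgebra.coe_algebraMap]
  simp [AddMonoidAlgebra.single_mul_single]

end Aux

set_option synthInstance.maxHeartbeats 400000 in
theorem apery_monomial_basis_bijection
    {m n s : ℕ} {T : Type} [AddCommGroup T] [Fintype T]
    (K : Type) [Field K]
    (a : Fin n → (Fin m → ℤ) × T)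
    -- `S` is reduced:
    (hred : ∀ x, x ∈ AddSubmonoid.closure (Set.range a) →
      -x ∈ AddSubmonoid.closure (Set.range a) → x = 0)
    -- `a` is the minimal set of generators:
    (hmin : ∀ i, a i ∉ AddSubmonoid.closure (Set.range a \ {a i}))
    (b : Fin s → (Fin m → ℤ) × T)
    (hbS : ∀ i, b i ∈ AddSubmonoid.closure (Set.range a))
    (hb0 : ∀ i, b i ≠ 0)
    -- `β i` is a factorization of `b i`:
    (β : Fin s → (Fin n →₀ ℕ))
    (hβ : ∀ i, degS a ⇑(β i) = b i)
    (J : Ideal (MvPolynomial (Fin n) K))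
    (hJ : J = latticeIdeal K a + Ideal.span (Set.range fun i => monomial (β i) (1 : K)))
    -- `D` is a monomial `K`-basis of `K[x]/J`:
    (D : Set (Fin n →₀ ℕ))
    (hD_li : LinearIndependent K
      (fun d : D => Ideal.Quotient.mk J (monomial d.val (1 : K))))
    (hD_span : Submodule.span K
      (Set.range fun d : D => Ideal.Quotient.mk J (monomial d.val (1 : K))) = ⊤) :
    Set.BijOn (fun α : Fin n →₀ ℕ => degS a ⇑α) D (apery a b) := by
  classical
  let S : AddSubmonoid ((Fin m → ℤ) × T) := AddSubmonoid.closure (Set.range a)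
  let aS : Fin n → S := fun i => ⟨a i, AddSubmonoid.subset_closure ⟨i, rfl⟩⟩
  let φ : MvPolynomial (Fin n) K →ₐ[K] AddMonoidAlgebra K S :=
    MvPolynomial.aeval fun i => AddMonoidAlgebra.single (aS i) (1:K)
  let dS : (Fin n →₀ ℕ) → S := fun α => ∑ i, α i • aS i
  have hdS : ∀ α : Fin n →₀ ℕ, ((dS α : S) : (Fin m → ℤ) × T) = degS a ⇑α := by
    intro α
    simp [dS, degS, aS]
  have hφm : ∀ (α : Fin n →₀ ℕ) (c : K),
      φ (monomial α c) = AddMonoidAlgebra.single (dS α) c := fun α c =>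
    phi_monomial K aS α c
  let bS : Fin s → S := fun i => ⟨b i, hbS i⟩
  let M : Ideal (AddMonoidAlgebra K S) :=
    Ideal.span (Set.range fun i => AddMonoidAlgebra.single (bS i) (1:K))
  -- φ maps J into M
  have hJM : ∀ f ∈ J, φ f ∈ M := by
    have : J ≤ M.comap φ.toRingHom := by
      rw [hJ]
      refine sup_le (Ideal.span_le.2 ?_) (Ideal.span_le.2 ?_)
      · rintro f ⟨α, α', h, rfl⟩
        have : dS α = dS α' := Subtype.ext (by rw [hdS, hdS, h])
        simp only [Ideal.mem_comap, AlgHom.toRingHom_eq_coe, RingHom.coe_coe, SetLike.mem_coe,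
          map_sub, hφm, this, sub_self]
        exact M.zero_mem
      · rintro f ⟨i, rfl⟩
        have : dS (β i) = bS i := Subtype.ext (by rw [hdS, hβ])
        simp only [Ideal.mem_comap, AlgHom.toRingHom_eq_coe, RingHom.coe_coe, SetLike.mem_coe,
          hφm, this]
        exact Ideal.subset_span ⟨i, rfl⟩
    exact fun f hf => this hf
  -- elements of M have zero coefficient at Apéry elements
  have hMcoeff : ∀ f ∈ M, ∀ y : S, (y : (Fin m → ℤ) × T) ∈ apery a b → f.coeff y = 0 := by
    intro f hf y hy
    obtain ⟨c, rfl⟩ := Ideal.mem_span_range_iff_exists_fun.1 hf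
    rw [AddMonoidAlgebra.coeff_sum, Finset.sum_apply']
    refine Finset.sum_eq_zero fun i _ => ?_
    by_contra hne
    have hysupp : y ∈ (c i • AddMonoidAlgebra.single (bS i) (1:K)).coeff.support :=
      Finsupp.mem_support_iff.2 hne
    rw [smul_eq_mul] at hysupp
    have := AddMonoidAlgebra.support_coeff_mul_subset _ _ hysupp
    rw [Finset.mem_add] at this
    obtain ⟨z, _, w, hw, hzw⟩ := this
    have hwb : w = bS i := Finset.mem_singleton.1 (Finsupp.support_single_subset hw)
    have : (y : (Fin m → ℤ) × T) - b i = (z : (Fin m → ℤ) × T) := by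
      rw [← hzw, hwb]; push_cast; exact add_sub_cancel_right _ _
    exact hy.2 i (this ▸ z.2)
  -- membership of binomials in J
  have hbin : ∀ α α' : Fin n →₀ ℕ, degS a ⇑α = degS a ⇑α' →
      monomial α (1:K) - monomial α' 1 ∈ J := by
    intro α α' h
    rw [hJ]
    exact Ideal.mem_sup_left (Ideal.subset_span ⟨α, α', h, rfl⟩)
  constructor
  · -- MapsTo
    intro d hd
    refine ⟨degS_mem_closure a d, fun i hi => ?_⟩
    obtain ⟨γ, hγ⟩ := exists_factorization a hi
    have hdeg : degS a ⇑(γ + β i) = degS a ⇑d := by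
      rw [degS_add, hγ, hβ]; abel
    have hmem : monomial d (1:K) ∈ J := by
      have h1 : monomial d (1:K) - monomial (γ + β i) 1 ∈ J := hbin _ _ hdeg.symm
      have h2 : monomial (γ + β i) (1:K) ∈ J := by
        rw [hJ]
        refine Ideal.mem_sup_right ?_
        have : monomial (γ + β i) (1:K) = monomial γ 1 * monomial (β i) 1 := by
          rw [monomial_mul, one_mul]
        rw [this]
        exact Ideal.mul_mem_left _ _ (Ideal.subset_span ⟨i, rfl⟩)
      simpa using add_mem h1 h2
    have hzero : Ideal.Quotient.mk J (monomial d (1:K)) = 0 :=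
      (Ideal.Quotient.eq_zero_iff_mem).2 hmem
    exact hD_li.ne_zero ⟨d, hd⟩ hzero
  constructor
  · -- InjOn
    intro d hd d' hd' h
    have : Ideal.Quotient.mk J (monomial d (1:K)) = Ideal.Quotient.mk J (monomial d' 1) :=
      Ideal.Quotient.eq.2 (hbin d d' h)
    have := hD_li.injective (a₁ := ⟨d, hd⟩) (a₂ := ⟨d', hd'⟩) this
    exact Subtype.ext_iff.1 this
  · -- SurjOn
    intro y hy
    obtain ⟨α, hα⟩ := exists_factorization a hy.1
    have hmem : Ideal.Quotient.mk J (monomial α (1:K)) ∈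
        Submodule.span K (Set.range fun d : D => Ideal.Quotient.mk J (monomial d.val (1:K))) := by
      rw [hD_span]; trivial
    rw [Finsupp.mem_span_range_iff_exists_finsupp] at hmem
    obtain ⟨c, hc⟩ := hmem
    set p : MvPolynomial (Fin n) K := c.sum fun d r => monomial d.val r with hp
    have hmkp : Ideal.Quotient.mk J p = Ideal.Quotient.mk J (monomial α 1) := by
      rw [hp, map_finsuppSum, ← hc]
      refine Finsupp.sum_congr fun d _ => ?_
      have h1 : (monomial d.val (c d) : MvPolynomial (Fin n) K) = c d • monomial d.val 1 := by
        rw [smul_monomial, smul_eq_mul, mul_one]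
      rw [h1, ← Ideal.Quotient.mkₐ_eq_mk K J, map_smul]
    have hJmem : monomial α (1:K) - p ∈ J := Ideal.Quotient.eq.1 hmkp.symm
    have hφJ : φ (monomial α (1:K) - p) ∈ M := hJM _ hJmem
    let yS : S := ⟨y, hy.1⟩
    have hdSα : dS α = yS := Subtype.ext (by rw [hdS, hα])
    have hcoeff : (φ (monomial α (1:K) - p)).coeff yS = 0 := hMcoeff _ hφJ yS hy
    have hφp : φ p = c.sum fun d r => AddMonoidAlgebra.single (dS d.val) r := by
      rw [hp, map_finsuppSum]
      exact Finsupp.sum_congr fun d _ => hφm _ _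
    rw [map_sub, hφm, hdSα, hφp, AddMonoidAlgebra.coeff_sub, Finsupp.sub_apply, AddMonoidAlgebra.coeff_single_apply,
      if_pos rfl, sub_eq_zero] at hcoeff
    have hne : (c.sum fun d r => AddMonoidAlgebra.single (dS d.val) r).coeff yS ≠ 0 := by
      rw [← hcoeff]; exact one_ne_zero
    rw [AddMonoidAlgebra.coeff_finsuppSum, Finsupp.sum_apply] at hne
    obtain ⟨d, hdsupp, hdne⟩ := Finset.exists_ne_zero_of_sum_ne_zero hne
    have hdne' : (AddMonoidAlgebra.single (dS d.val) (c d) : AddMonoidAlgebra K S).coeff yS ≠ 0 := hdne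
    have hdy : dS d.val = yS := by
      by_contra h
      rw [AddMonoidAlgebra.coeff_single, Finsupp.single_apply, if_neg h] at hdne'
      exact hdne' rfl
    refine ⟨d.val, d.2, ?_⟩
    show degS a ⇑(d.val) = y
    rw [← hdS, hdy]
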